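/- Let G = (V,E) be a finite undirected graph, M ⊆ E a matching, and G_M = (V',E_M) the associated directed bipartite graph. Then there exists an M-augmenting path in G if and only if there exists a strongly simple path from s to t in G_M. -/

import Mathlib

variable {V : Type*}

/-- `M` is a matching of the simple graph `G`: a set of edges of `G`,
no two of which share a node. -/
def IsMatchingOn (G : SimpleGraph V) (M : Set (Sym2 V)) : Prop :=
  M ⊆ G.edgeSet ∧ ∀ e ∈ M, ∀ f ∈ M, ∀ v : V, v ∈ e → v ∈ f → e = f

/-- A node is `M`-free if it is incident to no edge of `M`. -/
def MFree (M : Set (Sym2 V)) (v : V) : Prop := ∀ e ∈ M, v ∉ e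

/-- The edges of the vertex list alternate between `M` and its complement;
the Boolean `b` records whether the next edge must belong to `M`. -/
def AlternatesFrom (M : Set (Sym2 V)) : Bool → List V → Prop
  | _, [] => True
  | _, [_] => True
  | b, x :: y :: rest => (s(x, y) ∈ M ↔ b = true) ∧ AlternatesFrom M (!b) (y :: rest)

/-- A vertex list is `M`-alternating if its edges belong alternately to `M`
and to the complement of `M`. -/
def IsAlternating (M : Set (Sym2 V)) (p : List V) : Prop :=
  AlternatesFrom M true p ∨ AlternatesFrom M false p

/-- An `M`-augmenting path in `G`: a simple `M`-alternating path (with at least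
one edge) both of whose endpoints are `M`-free. -/
def IsAugmentingPath (G : SimpleGraph V) (M : Set (Sym2 V)) (p : List V) : Prop :=
  2 ≤ p.length ∧ p.Chain' G.Adj ∧ p.Nodup ∧ IsAlternating M p ∧
    (∀ u, p.head? = some u → MFree M u) ∧ (∀ u, p.getLast? = some u → MFree M u)

/-- The two labels `A` and `B`. -/
inductive Lbl where
  | A : Lbl
  | B : Lbl

/-- Nodes of the directed graph `G_M`: the nodes `[v,A]`, `[v,B]` for `v ∈ V`
together with two new nodes `s` and `t`. -/
inductive GMNode (V : Type*) where
  | inner : V → Lbl → GMNode V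
  | s : GMNode V
  | t : GMNode V

/-- The directed adjacency of `G_M`: the edges `([v,A],[w,B])` and
`([w,A],[v,B])` for `(v,w) ∈ M`; the edges `([x,B],[y,A])` and `([y,B],[x,A])`
for `(x,y) ∈ E ∖ M`; and the edges `(s,[v,B])` and `([v,A],t)` for every
`M`-free node `v`. -/
def gmAdj (G : SimpleGraph V) (M : Set (Sym2 V)) : GMNode V → GMNode V → Prop
  | .inner v .A, .inner w .B => s(v, w) ∈ M
  | .inner x .B, .inner y .A => s(x, y) ∈ G.edgeSet \ M
  | .s, .inner v .B => MFree M v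
  | .inner v .A, .t => MFree M v
  | _, _ => False

/-- `p` is a directed path from `u` to `v` with respect to the relation `R`. -/
def IsDirPath {α : Type*} (R : α → α → Prop) (p : List α) (u v : α) : Prop :=
  p.Chain' R ∧ p.head? = some u ∧ p.getLast? = some v

/-- A list of nodes of `G_M` is strongly simple if it has no repeated node and
contains, for each `v ∈ V`, at most one of the two nodes `[v,A]`, `[v,B]`. -/
def StronglySimple (p : List (GMNode V)) : Prop :=
  p.Nodup ∧ ∀ v : V, ¬(GMNode.inner v .A ∈ p ∧ GMNode.inner v .B ∈ p)

namespace AugAux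

/-- label corresponding to a parity bit -/
def lbl : Bool → Lbl
  | true => .B
  | false => .A

/-- encode a vertex list as a list of `G_M` nodes with alternating labels -/
def encode : Bool → List V → List (GMNode V)
  | _, [] => []
  | c, x :: r => .inner x (lbl c) :: encode (!c) r

lemma mem_encode {c : Bool} {p : List V} {n : GMNode V} (h : n ∈ encode c p) :
    ∃ v l, n = .inner v l ∧ v ∈ p := by
  induction p generalizing c with
  | nil => simp [encode] at h
  | cons x r ih =>
    simp only [encode, List.mem_cons] at h
    rcases h with h | h
    · exact ⟨x, lbl c, h, List.mem_cons_self⟩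
    · obtain ⟨v, l, rfl, hv⟩ := ih h
      exact ⟨v, l, rfl, List.mem_cons_of_mem _ hv⟩

lemma encode_mem_of_mem {p : List V} {v : V} (h : v ∈ p) (c : Bool) :
    ∃ l, GMNode.inner v l ∈ encode c p := by
  induction p generalizing c with
  | nil => simp at h
  | cons x r ih =>
    rcases List.mem_cons.1 h with rfl | h
    · exact ⟨lbl c, List.mem_cons_self⟩
    · obtain ⟨l, hl⟩ := ih h (!c)
      exact ⟨l, List.mem_cons_of_mem _ hl⟩

lemma encode_nodup {p : List V} (h : p.Nodup) (c : Bool) : (encode c p).Nodup := by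
  induction p generalizing c with
  | nil => simp [encode]
  | cons x r ih =>
    rcases List.nodup_cons.1 h with ⟨hx, hr⟩
    refine List.nodup_cons.2 ⟨?_, ih hr (!c)⟩
    intro hmem
    obtain ⟨v, l, he, hv⟩ := mem_encode hmem
    cases he
    exact hx hv

lemma encode_label {p : List V} (h : p.Nodup) :
    ∀ {c : Bool} {v : V} {l l' : Lbl}, GMNode.inner v l ∈ encode c p →
      GMNode.inner v l' ∈ encode c p → l = l' := by
  induction p with
  | nil => intro c v l l' h1; simp [encode] at h1
  | cons x r ih =>
    intro c v l l' h1 h2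
    rcases List.nodup_cons.1 h with ⟨hx, hr⟩
    simp only [encode, List.mem_cons] at h1 h2
    rcases h1 with h1 | h1 <;> rcases h2 with h2 | h2
    · rw [GMNode.inner.injEq] at h1 h2
      rw [h1.2, h2.2]
    · obtain ⟨w, l2, he, hw⟩ := mem_encode h2
      rw [GMNode.inner.injEq] at h1 he
      exact absurd (he.1 ▸ hw) (h1.1 ▸ hx)
    · obtain ⟨w, l2, he, hw⟩ := mem_encode h1
      rw [GMNode.inner.injEq] at h2 he
      exact absurd (he.1 ▸ hw) (h2.1 ▸ hx)
    · exact ih hr h1 h2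

lemma nodup_of_encode {p : List V} {c : Bool}
    (h1 : (encode c p).Nodup)
    (h2 : ∀ v : V, ¬(GMNode.inner v .A ∈ encode c p ∧ GMNode.inner v .B ∈ encode c p)) :
    p.Nodup := by
  induction p generalizing c with
  | nil => simp
  | cons x r ih =>
    simp only [encode, List.nodup_cons] at h1
    refine List.nodup_cons.2 ⟨?_, ih h1.2 (fun v hv =>
      h2 v ⟨List.mem_cons_of_mem _ hv.1, List.mem_cons_of_mem _ hv.2⟩)⟩
    intro hx
    obtain ⟨l, hl⟩ := encode_mem_of_mem hx (!c)
    by_cases hll : l = lbl c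
    · exact h1.1 (hll ▸ hl)
    · have hmemc : GMNode.inner x (lbl c) ∈ encode c (x :: r) :=
        List.mem_cons_self
      have hmeml : GMNode.inner x l ∈ encode c (x :: r) :=
        List.mem_cons_of_mem _ hl
      cases l <;> cases c <;> simp [lbl] at hll hmemc hmeml <;>
        exact h2 x ⟨by assumption, by assumption⟩

/-- forward key lemma: encoded alternating paths give chains in `G_M`. -/
lemma chain_encode_t (G : SimpleGraph V) (M : Set (Sym2 V)) :
    ∀ (p : List V) (c : Bool), p.Chain' G.Adj → AlternatesFrom M (!c) p →
      (∀ u, p.getLast? = some u → MFree M u) →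
      (c = true → ∃ e ∈ M, ∀ u, p.head? = some u → u ∈ e) →
      List.Chain' (gmAdj G M) (encode c p ++ [GMNode.t]) := by
  intro p
  induction p with
  | nil => intro c _ _ _ _; simp [encode, List.Chain']
  | cons x r ih =>
    intro c hchain halt hlast hc
    cases r with
    | nil =>
      cases c with
      | true =>
        obtain ⟨e, he, hxe⟩ := hc rfl
        exact absurd (hxe x rfl) (hlast x rfl e he)
      | false =>
        simpa [encode, lbl, gmAdj, List.Chain'] using hlast x rfl
    | cons y r' =>
      obtain ⟨hxy, halt'⟩ := halt
      rcases List.isChain_cons_cons.1 hchain with ⟨hadj, hchain'⟩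
      have hlast' : ∀ u, (y :: r').getLast? = some u → MFree M u := by
        intro u hu; exact hlast u (by rw [List.getLast?_cons_cons]; exact hu)
      have htail : List.Chain' (gmAdj G M) (encode (!c) (y :: r') ++ [GMNode.t]) := by
        refine ih (!c) hchain' (by simpa using halt') hlast' ?_
        intro hcc
        cases c with
        | true => simp at hcc
        | false =>
          refine ⟨s(x, y), hxy.2 rfl, ?_⟩
          intro u hu
          simp only [List.head?_cons, Option.some.injEq] at hu
          subst hu
          exact Sym2.mem_mk_right x y
      show List.Chain' (gmAdj G M)
        (GMNode.inner x (lbl c) :: (encode (!c) (y :: r') ++ [GMNode.t]))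
      have hhd : encode (!c) (y :: r') ++ [GMNode.t] =
          GMNode.inner y (lbl (!c)) :: (encode (!(!c)) r' ++ [GMNode.t]) := rfl
      rw [hhd]
      refine List.isChain_cons_cons.2 ⟨?_, hhd ▸ htail⟩
      cases c with
      | true =>
        show s(x, y) ∈ G.edgeSet \ M
        exact ⟨G.mem_edgeSet.2 hadj, fun hm => by simp [hm] at hxy⟩
      | false =>
        show s(x, y) ∈ M
        exact hxy.2 rfl

/-- backward key lemma: decomposing strongly simple chains in `G_M`. -/
lemma decode_of_chain (G : SimpleGraph V) (M : Set (Sym2 V)) (hM : IsMatchingOn G M) :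
    ∀ (l : List (GMNode V)) (c : Bool) (v : V),
      List.Chain' (gmAdj G M) (GMNode.inner v (lbl c) :: l) →
      (GMNode.inner v (lbl c) :: l).getLast? = some .t →
      ∃ w : List V, w.head? = some v ∧ w.Chain' G.Adj ∧ AlternatesFrom M (!c) w ∧
        (∀ u, w.getLast? = some u → MFree M u) ∧
        GMNode.inner v (lbl c) :: l = encode c w ++ [GMNode.t] := by
  intro l
  induction l with
  | nil => intro c v _ hlast; simp at hlast
  | cons n l' ih =>
    intro c v hchain hlast
    rcases List.isChain_cons_cons.1 hchain with ⟨hadj, hchain'⟩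
    cases n with
    | s => cases c <;> simp [gmAdj, lbl] at hadj
    | t =>
      cases c with
      | true => simp [gmAdj, lbl] at hadj
      | false =>
        have hfree : MFree M v := hadj
        cases l' with
        | nil =>
          refine ⟨[v], rfl, List.isChain_singleton v, trivial, ?_, rfl⟩
          intro u hu
          simp only [List.getLast?_singleton, Option.some.injEq] at hu
          exact hu ▸ hfree
        | cons m l'' =>
          rcases List.isChain_cons_cons.1 hchain' with ⟨hbad, _⟩
          cases m <;> exact absurd hbad (by simp [gmAdj])
    | inner y l2 =>
      have hlast' : (GMNode.inner y l2 :: l').getLast? = some GMNode.t := by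
        rwa [List.getLast?_cons_cons] at hlast
      cases c with
      | true =>
        cases l2 with
        | B => simp [gmAdj, lbl] at hadj
        | A =>
          have hedge : s(v, y) ∈ G.edgeSet \ M := hadj
          obtain ⟨w', hhd, hch, halt, hlastf, heq⟩ := ih false y hchain' hlast'
          obtain ⟨tw, rfl⟩ : ∃ tw, w' = y :: tw := by
            cases w' with
            | nil => simp at hhd
            | cons a tw => simp only [List.head?_cons, Option.some.injEq] at hhd; exact ⟨tw, by rw [hhd]⟩
          refine ⟨v :: y :: tw, rfl, ?_, ?_, ?_, ?_⟩
          · exact List.isChain_cons_cons.2 ⟨G.mem_edgeSet.1 hedge.1, hch⟩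
          · exact ⟨by simp [hedge.2], by simpa using halt⟩
          · intro u hu; exact hlastf u (by rwa [List.getLast?_cons_cons] at hu)
          · exact congrArg (List.cons (GMNode.inner v (lbl true))) heq
      | false =>
        cases l2 with
        | A => simp [gmAdj, lbl] at hadj
        | B =>
          have hedge : s(v, y) ∈ M := hadj
          obtain ⟨w', hhd, hch, halt, hlastf, heq⟩ := ih true y hchain' hlast'
          obtain ⟨tw, rfl⟩ : ∃ tw, w' = y :: tw := by
            cases w' with
            | nil => simp at hhd
            | cons a tw => simp only [List.head?_cons, Option.some.injEq] at hhd; exact ⟨tw, by rw [hhd]⟩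
          refine ⟨v :: y :: tw, rfl, ?_, ?_, ?_, ?_⟩
          · exact List.isChain_cons_cons.2 ⟨G.mem_edgeSet.1 (hM.1 hedge), hch⟩
          · exact ⟨by simp [hedge], by simpa using halt⟩
          · intro u hu; exact hlastf u (by rwa [List.getLast?_cons_cons] at hu)
          · exact congrArg (List.cons (GMNode.inner v (lbl false))) heq

end AugAux

open AugAux in
/-- There exists an `M`-augmenting path in `G` iff there exists a strongly
simple path from `s` to `t` in `G_M`. -/
theorem augmenting_iff_stronglySimple_path (G : SimpleGraph V) (M : Set (Sym2 V))
    (hM : IsMatchingOn G M) :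
    (∃ p : List V, IsAugmentingPath G M p) ↔
      ∃ p : List (GMNode V), IsDirPath (gmAdj G M) p .s .t ∧ StronglySimple p := by
  constructor
  · rintro ⟨p, hlen, hchain, hnodup, halt, hhead, hlast⟩
    obtain ⟨v0, v1, rest, rfl⟩ : ∃ a b l, p = a :: b :: l := by
      cases p with
      | nil => simp at hlen
      | cons a q =>
        cases q with
        | nil => simp at hlen
        | cons b l => exact ⟨a, b, l, rfl⟩
    have hfree0 : MFree M v0 := hhead v0 rfl
    have halt' : AlternatesFrom M false (v0 :: v1 :: rest) := by
      rcases halt with h | h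
      · exact ((hfree0 _ (h.1.2 rfl) (Sym2.mem_mk_left v0 v1)).elim)
      · exact h
    refine ⟨(GMNode.s :: encode true (v0 :: v1 :: rest)) ++ [GMNode.t],
      ⟨?_, by simp, List.getLast?_concat⟩, ?_, ?_⟩
    · show List.Chain' (gmAdj G M)
        (GMNode.s :: GMNode.inner v0 (lbl true) ::
          (encode false (v1 :: rest) ++ [GMNode.t]))
      refine List.isChain_cons_cons.2 ⟨hfree0, ?_⟩
      show List.Chain' (gmAdj G M)
        (GMNode.inner v0 (lbl true) :: GMNode.inner v1 (lbl false) ::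
          (encode true rest ++ [GMNode.t]))
      refine List.isChain_cons_cons.2 ⟨?_, ?_⟩
      · show s(v0, v1) ∈ G.edgeSet \ M
        exact ⟨G.mem_edgeSet.2 (List.isChain_cons_cons.1 hchain).1,
          fun hm => by simpa using halt'.1.1 hm⟩
      · show List.Chain' (gmAdj G M) (encode false (v1 :: rest) ++ [GMNode.t])
        exact chain_encode_t G M (v1 :: rest) false (List.isChain_cons_cons.1 hchain).2
          halt'.2
          (fun u hu => hlast u (by rw [List.getLast?_cons_cons]; exact hu))
          (by simp)
    · -- Nodup
      show (GMNode.s :: (encode true (v0 :: v1 :: rest) ++ [GMNode.t])).Nodup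
      refine List.nodup_cons.2 ⟨?_, ?_⟩
      · intro h
        rcases List.mem_append.1 h with h | h
        · obtain ⟨v, l, he, _⟩ := mem_encode h
          cases he
        · rcases List.mem_singleton.1 h with h
          cases h
      · refine List.nodup_append.2 ⟨encode_nodup hnodup true, List.nodup_singleton _, ?_⟩
        intro a ha b hb hab
        rcases List.mem_singleton.1 hb with rfl
        subst hab
        obtain ⟨v, l, he, _⟩ := mem_encode ha
        cases he
    · -- strongly simple second condition
      intro v ⟨hA, hB⟩
      have hmem : ∀ l : Lbl,
          GMNode.inner v l ∈ (GMNode.s :: encode true (v0 :: v1 :: rest)) ++ [GMNode.t] →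
          GMNode.inner v l ∈ encode true (v0 :: v1 :: rest) := by
        intro l hl
        rcases List.mem_append.1 hl with hl | hl
        · rcases List.mem_cons.1 hl with h | h
          · cases h
          · exact h
        · cases List.mem_singleton.1 hl
      exact Lbl.noConfusion (encode_label hnodup (hmem _ hA) (hmem _ hB))
  · rintro ⟨p, ⟨hchain, hhead, hlast⟩, hnd, hss⟩
    obtain ⟨q, rfl⟩ : ∃ q, p = GMNode.s :: q := by
      cases p with
      | nil => simp at hhead
      | cons a q =>
        simp only [List.head?_cons, Option.some.injEq] at hhead
        exact ⟨q, by rw [hhead]⟩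
    cases q with
    | nil => simp at hlast
    | cons n q' =>
      rcases List.isChain_cons_cons.1 hchain with ⟨hadj, hchain'⟩
      obtain ⟨v0, rfl⟩ : ∃ v0, n = GMNode.inner v0 Lbl.B := by
        cases n with
        | inner y l2 =>
          cases l2 with
          | A => exact absurd hadj (by simp [gmAdj])
          | B => exact ⟨y, rfl⟩
        | s => exact absurd hadj (by simp [gmAdj])
        | t => exact absurd hadj (by simp [gmAdj])
      have hfree0 : MFree M v0 := hadj
      have hlast' : (GMNode.inner v0 Lbl.B :: q').getLast? = some GMNode.t := by
        rwa [List.getLast?_cons_cons] at hlast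
      obtain ⟨w, hhd, hch, haltw, hlastf, heq⟩ :=
        decode_of_chain G M hM q' true v0 hchain' hlast'
      obtain ⟨tw, rfl⟩ : ∃ tw, w = v0 :: tw := by
        cases w with
        | nil => simp at hhd
        | cons a tw =>
          simp only [List.head?_cons, Option.some.injEq] at hhd
          exact ⟨tw, by rw [hhd]⟩
      have hB : lbl true = Lbl.B := rfl
      rw [hB] at heq
      cases tw with
      | nil =>
        have hq' : q' = [GMNode.t] := by
          have heq' : GMNode.inner v0 Lbl.B :: q' = [GMNode.inner v0 Lbl.B, GMNode.t] := heq
          exact (List.cons.injEq _ _ _ _ ▸ heq').2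
        subst hq'
        exact absurd (List.isChain_cons_cons.1 hchain').1 (by simp [gmAdj])
      | cons v1 rest =>
        refine ⟨v0 :: v1 :: rest, ?_, hch, ?_, Or.inr haltw, ?_, hlastf⟩
        · simp [List.length_cons]
        · -- Nodup
          rw [heq] at hnd hss
          have hnd2 : (encode true (v0 :: v1 :: rest)).Nodup :=
            (List.nodup_append.1 (List.nodup_cons.1 hnd).2).1
          refine nodup_of_encode hnd2 ?_
          intro v ⟨h1, h2⟩
          exact hss v ⟨List.mem_cons_of_mem _ (List.mem_append_left _ h1),
            List.mem_cons_of_mem _ (List.mem_append_left _ h2)⟩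
        · intro u hu
          simp only [List.head?_cons, Option.some.injEq] at hu
          exact hu ▸ hfree0
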